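/- Let f : [0, ∞) → ℝ^{L_R*} be a solution of the discrete acoustic wave kinetic system. Then the total energy ∑_{p∈L_R*} |p|·f_p(t) is constant in t. -/

import Mathlib

open scoped BigOperators Classical

/-- Euclidean norm of a point of the integer lattice `ℤ³`. -/
noncomputable def enorm3 (p : Fin 3 → ℤ) : ℝ := Real.sqrt (∑ i, ((p i : ℝ))^2)

/-- The truncated lattice `L_R* = {p ∈ ℤ³ : 0 < |p| < R}` (as a finite set). -/
noncomputable def latticeBall (R : ℝ) : Finset (Fin 3 → ℤ) :=
  (Finset.Icc (fun _ => (-⌈R⌉ : ℤ)) (fun _ => (⌈R⌉ : ℤ))).filter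
    (fun p => 0 < enorm3 p ∧ enorm3 p < R)

/-- Right-hand side of the discrete exact-resonance acoustic wave kinetic system, with
kernel `V_{p₁,p₂,p₃} = |p₁||p₂||p₃|` and phonon dispersion `ω(p) = |p|`. -/
noncomputable def Qres (R : ℝ) (f : (Fin 3 → ℤ) → ℝ) (p1 : Fin 3 → ℤ) : ℝ :=
  (∑ p2 ∈ latticeBall R, ∑ p3 ∈ latticeBall R,
      if p1 = p2 + p3 ∧ enorm3 p1 = enorm3 p2 + enorm3 p3 then
        enorm3 p1 * enorm3 p2 * enorm3 p3 *
          (f p2 * f p3 - f p1 * (f p2 + f p3)) else 0)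
  - 2 * ∑ p2 ∈ latticeBall R, ∑ p3 ∈ latticeBall R,
      if p3 = p1 + p2 ∧ enorm3 p3 = enorm3 p1 + enorm3 p2 then
        enorm3 p1 * enorm3 p2 * enorm3 p3 *
          (f p1 * f p2 - f p3 * (f p1 + f p2)) else 0

/-- Right-hand side of the discrete near-resonance acoustic wave kinetic system with
resonance broadening `Λ`. -/
noncomputable def QNR (R Λ : ℝ) (f : (Fin 3 → ℤ) → ℝ) (p1 : Fin 3 → ℤ) : ℝ :=
  (∑ p2 ∈ latticeBall R, ∑ p3 ∈ latticeBall R,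
      if p1 = p2 + p3 ∧ |enorm3 p1 - enorm3 p2 - enorm3 p3| ≤ Λ then
        enorm3 p1 * enorm3 p2 * enorm3 p3 *
          (f p2 * f p3 - f p1 * (f p2 + f p3)) else 0)
  - 2 * ∑ p2 ∈ latticeBall R, ∑ p3 ∈ latticeBall R,
      if p3 = p1 + p2 ∧ |enorm3 p3 - enorm3 p1 - enorm3 p2| ≤ Λ then
        enorm3 p1 * enorm3 p2 * enorm3 p3 *
          (f p1 * f p2 - f p3 * (f p1 + f p2)) else 0

lemma sum_cyc {α : Type*} (B : Finset α) (F : α → α → α → ℝ) :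
    ∑ x ∈ B, ∑ y ∈ B, ∑ z ∈ B, F x y z = ∑ x ∈ B, ∑ y ∈ B, ∑ z ∈ B, F z x y := by
  have h : ∀ x ∈ B, ∑ y ∈ B, ∑ z ∈ B, F z x y = ∑ z ∈ B, ∑ y ∈ B, F z x y :=
    fun x _ => Finset.sum_comm
  rw [Finset.sum_congr rfl h, Finset.sum_comm]

lemma qres_energy_sum (R : ℝ) (f : (Fin 3 → ℤ) → ℝ) :
    ∑ p ∈ latticeBall R, enorm3 p * Qres R f p = 0 := by
  classical
  set B := latticeBall R with hB
  set ω := enorm3 with hω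
  set c : (Fin 3 → ℤ) → (Fin 3 → ℤ) → (Fin 3 → ℤ) → ℝ := fun p1 p2 p3 =>
    if p3 = p1 + p2 ∧ ω p3 = ω p1 + ω p2 then
      ω p1 * ω p2 * ω p3 * (f p1 * f p2 - f p3 * (f p1 + f p2)) else 0 with hc
  have key : ∀ p1 ∈ B, ω p1 * Qres R f p1 =
      (∑ p2 ∈ B, ∑ p3 ∈ B, ω p1 * c p2 p3 p1)
        - 2 * ∑ p2 ∈ B, ∑ p3 ∈ B, ω p1 * c p1 p2 p3 := by
    intro p1 _
    rw [Qres]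
    rw [mul_sub]
    congr 1
    · rw [Finset.mul_sum]
      refine Finset.sum_congr rfl fun p2 _ => ?_
      rw [Finset.mul_sum]
      refine Finset.sum_congr rfl fun p3 _ => ?_
      simp only [hc]
      split_ifs <;> ring
    · rw [mul_left_comm]
      congr 1
      rw [Finset.mul_sum]
      exact Finset.sum_congr rfl fun p2 _ => Finset.mul_sum _ _ _
  rw [Finset.sum_congr rfl key, Finset.sum_sub_distrib, ← Finset.mul_sum]
  -- S1 : first triple sum
  have cyc : ∑ p1 ∈ B, ∑ p2 ∈ B, ∑ p3 ∈ B, ω p1 * c p2 p3 p1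
      = ∑ p1 ∈ B, ∑ p2 ∈ B, ∑ p3 ∈ B, ω p3 * c p1 p2 p3 :=
    sum_cyc B (fun x y z => ω x * c y z x)
  have split3 : ∀ p1 p2 p3 : Fin 3 → ℤ,
      ω p3 * c p1 p2 p3 = ω p1 * c p1 p2 p3 + ω p2 * c p2 p1 p3 := by
    intro p1 p2 p3
    by_cases h : p3 = p1 + p2 ∧ ω p3 = ω p1 + ω p2
    · have h' : p3 = p2 + p1 ∧ ω p3 = ω p2 + ω p1 :=
        ⟨by rw [add_comm]; exact h.1, by rw [add_comm]; exact h.2⟩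
      simp only [hc, if_pos h, if_pos h']
      rw [h.2]; ring
    · have h' : ¬(p3 = p2 + p1 ∧ ω p3 = ω p2 + ω p1) := fun hh =>
        h ⟨by rw [add_comm]; exact hh.1, by rw [add_comm]; exact hh.2⟩
      simp only [hc, if_neg h, if_neg h', mul_zero, add_zero]
  rw [cyc]
  have : ∑ p1 ∈ B, ∑ p2 ∈ B, ∑ p3 ∈ B, ω p3 * c p1 p2 p3
      = 2 * ∑ p1 ∈ B, ∑ p2 ∈ B, ∑ p3 ∈ B, ω p1 * c p1 p2 p3 := by
    simp only [split3, Finset.sum_add_distrib]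
    have : ∑ p1 ∈ B, ∑ p2 ∈ B, ∑ p3 ∈ B, ω p2 * c p2 p1 p3
        = ∑ p1 ∈ B, ∑ p2 ∈ B, ∑ p3 ∈ B, ω p1 * c p1 p2 p3 := Finset.sum_comm
    rw [this]; ring
  rw [this]; ring

/-- Conservation of energy for the discrete acoustic wave kinetic system:
`∑_{p ∈ L_R*} |p| f_p(t)` is constant along every solution. -/
theorem energy_conservation_lattice (R : ℝ) (hR : 0 < R)
    (f : ℝ → (Fin 3 → ℤ) → ℝ)
    (hsol : ∀ p ∈ latticeBall R, ∀ t : ℝ, 0 ≤ t →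
      HasDerivAt (fun s => f s p) (Qres R (f t) p) t) :
    ∀ t : ℝ, 0 ≤ t →
      ∑ p ∈ latticeBall R, enorm3 p * f t p = ∑ p ∈ latticeBall R, enorm3 p * f 0 p := by
  intro t ht
  set g : ℝ → ℝ := fun s => ∑ p ∈ latticeBall R, enorm3 p * f s p with hg
  have hderiv : ∀ s : ℝ, 0 ≤ s → HasDerivAt g 0 s := by
    intro s hs
    have h0 : HasDerivAt g (∑ p ∈ latticeBall R, enorm3 p * Qres R (f s) p) s := by
      apply HasDerivAt.fun_sum
      intro p hp
      exact (hsol p hp s hs).const_mul (enorm3 p)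
    rwa [qres_energy_sum R (f s)] at h0
  have hcont : ContinuousOn g (Set.Icc 0 t) := fun x hx =>
    ((hderiv x hx.1).continuousAt).continuousWithinAt
  have hconst := constant_of_has_deriv_right_zero hcont
    (fun x hx => ((hderiv x hx.1).hasDerivWithinAt))
  exact hconst t (Set.right_mem_Icc.mpr ht)
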